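/- Let o, p, q, i, p', q' be points in the plane with i in the interior of triangle opq, p' on segment op, q' on segment oq, p' on ray qi beyond i, q' on ray pi beyond i, and suppose |op'| ≥ (1/10)|op| and |oq'| ≥ (1/10)|oq|. If the triangle oiq has area at most the area of triangle oip, then area(piq) ≤ 10·area(pip'). -/

import Mathlib

open Real MeasureTheory ENNReal Pointwise

noncomputable def det2 (u v : EuclideanSpace ℝ (Fin 2)) : ℝ := u 0 * v 1 - u 1 * v 0

lemma tri_vol : ∃ c0 : ℝ≥0∞, c0 ≠ ⊤ ∧ ∀ a b c : EuclideanSpace ℝ (Fin 2),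
    volume (convexHull ℝ ({a, b, c} : Set (EuclideanSpace ℝ (Fin 2)))) =
      ENNReal.ofReal |det2 (b - a) (c - a)| * c0 := by
  classical
  set bb := PiLp.basisFun 2 ℝ (Fin 2) with hbb
  set T : Set (EuclideanSpace ℝ (Fin 2)) := convexHull ℝ ({0, bb 0, bb 1}) with hT
  refine ⟨volume T, ?_, ?_⟩
  · exact ((((Set.finite_singleton (bb 1)).insert (bb 0)).insert 0).isCompact_convexHull ℝ).measure_lt_top.ne
  intro a b c
  set f : EuclideanSpace ℝ (Fin 2) →ₗ[ℝ] EuclideanSpace ℝ (Fin 2) :=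
    bb.constr ℝ ![b - a, c - a] with hf
  have h0 : f (bb 0) = b - a := by simp [hf]
  have h1 : f (bb 1) = c - a := by simp [hf]
  have himg : ({a, b, c} : Set (EuclideanSpace ℝ (Fin 2))) = a +ᵥ (f '' {0, bb 0, bb 1}) := by
    rw [Set.image_insert_eq, Set.image_insert_eq, Set.image_singleton, h0, h1, map_zero]
    simp [Set.vadd_set_insert, Set.vadd_set_singleton]
  have hdet : LinearMap.det f = det2 (b - a) (c - a) := by
    rw [← LinearMap.det_toMatrix bb, Matrix.det_fin_two, det2]
    simp only [LinearMap.toMatrix_apply, h0, h1, hbb, PiLp.basisFun_repr]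
    rw [← hbb, h0, h1]
    simp only [PiLp.sub_apply]
    ring
  calc volume (convexHull ℝ ({a, b, c} : Set (EuclideanSpace ℝ (Fin 2))))
      = volume (a +ᵥ convexHull ℝ (f '' {0, bb 0, bb 1})) := by rw [himg, convexHull_vadd]
    _ = volume (f '' T) := by rw [measure_vadd, f.image_convexHull]
    _ = ENNReal.ofReal |det2 (b - a) (c - a)| * volume T := by
        rw [Measure.addHaar_image_linearMap, hdet]

/-- Triangle area comparison: with i interior to triangle opq, p' on segment op beyond which the
ray qi passes (i ∈ [q,p']), q' on segment oq with i ∈ [p,q'], |op'| ≥ |op|/10, |oq'| ≥ |oq|/10,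
and area(oiq) ≤ area(oip), we get area(piq) ≤ 10·area(pip'). -/
theorem stmt_12 (o p q i p' q' : EuclideanSpace ℝ (Fin 2))
    (hi : i ∈ interior (convexHull ℝ ({o, p, q} : Set (EuclideanSpace ℝ (Fin 2)))))
    (hp' : p' ∈ segment ℝ o p) (hq' : q' ∈ segment ℝ o q)
    (hp'ray : i ∈ segment ℝ q p') (hq'ray : i ∈ segment ℝ p q')
    (hop' : (1 / 10) * dist o p ≤ dist o p') (hoq' : (1 / 10) * dist o q ≤ dist o q')
    (harea : volume (convexHull ℝ ({o, i, q} : Set (EuclideanSpace ℝ (Fin 2)))) ≤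
      volume (convexHull ℝ ({o, i, p} : Set (EuclideanSpace ℝ (Fin 2))))) :
    volume (convexHull ℝ ({p, i, q} : Set (EuclideanSpace ℝ (Fin 2)))) ≤
      10 * volume (convexHull ℝ ({p, i, p'} : Set (EuclideanSpace ℝ (Fin 2)))) := by
  obtain ⟨c0, hc0top, hvol⟩ := tri_vol
  obtain ⟨a1, s, ha1, hs0, ha1s, hp'def⟩ := hp'
  obtain ⟨aq, α, haq0, hα0, haqα, hidef⟩ := hp'ray
  have hs1 : s ≤ 1 := by linarith
  have hα1 : α ≤ 1 := by linarith
  -- coordinate equations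
  have hp'c : ∀ k : Fin 2, p' k = (1 - s) * o k + s * p k := by
    intro k
    have := congrFun (congrArg WithLp.ofLp hp'def) k
    simp only [PiLp.add_apply, PiLp.smul_apply, smul_eq_mul] at this
    rw [← this]; rw [show a1 = 1 - s by linarith]
  have hic : ∀ k : Fin 2, i k = (1 - α) * q k + α * p' k := by
    intro k
    have := congrFun (congrArg WithLp.ofLp hidef) k
    simp only [PiLp.add_apply, PiLp.smul_apply, smul_eq_mul] at this
    rw [← this]; rw [show aq = 1 - α by linarith]
  set Δ : ℝ := det2 (p - o) (q - o) with hΔdef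
  -- determinant identities
  have e1 : det2 (i - o) (q - o) = α * s * Δ := by
    simp only [det2, PiLp.sub_apply, hΔdef, hic 0, hic 1, hp'c 0, hp'c 1]; ring
  have e2 : det2 (i - o) (p - o) = -((1 - α) * Δ) := by
    simp only [det2, PiLp.sub_apply, hΔdef, hic 0, hic 1, hp'c 0, hp'c 1]; ring
  have e3 : det2 (i - p) (q - p) = α * (s - 1) * Δ := by
    simp only [det2, PiLp.sub_apply, hΔdef, hic 0, hic 1, hp'c 0, hp'c 1]; ring
  have e4 : det2 (i - p) (p' - p) = (1 - s) * (1 - α) * Δ := by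
    simp only [det2, PiLp.sub_apply, hΔdef, hic 0, hic 1, hp'c 0, hp'c 1]; ring
  -- nondegeneracy
  have hpos : 0 < volume (convexHull ℝ ({o, p, q} : Set (EuclideanSpace ℝ (Fin 2)))) :=
    Measure.measure_pos_of_nonempty_interior _ ⟨i, hi⟩
  rw [hvol] at hpos
  have hc0 : c0 ≠ 0 := by
    rintro rfl; simp at hpos
  have hΔpos : 0 < |Δ| := by
    by_contra h
    push_neg at h
    have : |Δ| = 0 := le_antisymm h (abs_nonneg _)
    rw [this] at hpos; simp at hpos
  -- s ≥ 1/10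
  have hp'v : p' - o = s • (p - o) := by
    ext k
    simp only [PiLp.sub_apply, PiLp.smul_apply, smul_eq_mul, hp'c k]; ring
  have hdop : dist o p' = s * dist o p := by
    rw [dist_eq_norm, dist_eq_norm, norm_sub_rev o p', norm_sub_rev o p, hp'v, norm_smul,
      Real.norm_eq_abs, abs_of_nonneg hs0]
  have hoppos : 0 < dist o p := by
    refine dist_pos.mpr fun h => hΔpos.ne' ?_
    subst h
    simp [hΔdef, det2]
  have hs110 : 1 / 10 ≤ s := by
    rw [hdop] at hop'
    exact le_of_mul_le_mul_right (by linarith) hoppos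
  -- extract real inequality from harea
  rw [hvol, hvol, e1, e2, abs_mul, abs_mul, abs_neg, abs_mul,
    abs_of_nonneg hα0, abs_of_nonneg hs0, abs_of_nonneg (by linarith : (0:ℝ) ≤ 1 - α)]
    at harea
  have harea' : α * s * |Δ| ≤ (1 - α) * |Δ| :=
    (ENNReal.ofReal_le_ofReal_iff (mul_nonneg (by linarith) (abs_nonneg _))).mp
      ((ENNReal.mul_le_mul_iff_left hc0 hc0top).mp harea)
  have hαs : α * s ≤ 1 - α := le_of_mul_le_mul_right harea' hΔpos
  have hα10 : α ≤ 10 * (1 - α) := by nlinarith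
  -- conclude
  rw [hvol, hvol, e3, e4]
  have key : |α * (s - 1) * Δ| ≤ 10 * |(1 - s) * (1 - α) * Δ| := by
    rw [abs_mul, abs_mul, abs_mul, abs_mul, abs_of_nonneg hα0,
      abs_of_nonneg (by linarith : (0:ℝ) ≤ 1 - s), abs_of_nonneg (by linarith : (0:ℝ) ≤ 1 - α),
      abs_of_nonpos (by linarith : s - 1 ≤ 0)]
    nlinarith [mul_nonneg (mul_nonneg (by linarith : (0:ℝ) ≤ 10*(1-α)-α) (by linarith : (0:ℝ) ≤ 1-s)) (abs_nonneg Δ)]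
  calc ENNReal.ofReal |α * (s - 1) * Δ| * c0
      ≤ ENNReal.ofReal (10 * |(1 - s) * (1 - α) * Δ|) * c0 :=
        mul_le_mul_left (ENNReal.ofReal_le_ofReal key) c0
    _ = 10 * (ENNReal.ofReal |(1 - s) * (1 - α) * Δ| * c0) := by
        rw [ENNReal.ofReal_mul (by norm_num), ← mul_assoc]
        norm_num
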